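/- Let (R, m) be a Noetherian local ring. Then the maximal ideal m fails to be a trace ideal (i.e., tr_R(m) = R) if and only if R is a discrete valuation ring. -/

import Mathlib

/-- The trace ideal of an `R`-module `M`. -/
def traceIdeal (R : Type*) [CommRing R] (M : Type*) [AddCommGroup M] [Module R M] : Ideal R :=
  ⨆ f : M →ₗ[R] R, LinearMap.range f

open IsLocalRing

/-- The maximal ideal is always contained in its trace ideal, via the inclusion map. -/
lemma maximalIdeal_le_traceIdeal (R : Type*) [CommRing R] [IsLocalRing R] :
    maximalIdeal R ≤ traceIdeal R (maximalIdeal R) := by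
  intro x hx
  have : x ∈ LinearMap.range ((maximalIdeal R).subtype) := ⟨⟨x, hx⟩, rfl⟩
  exact (le_iSup (fun f : maximalIdeal R →ₗ[R] R => LinearMap.range f)
    ((maximalIdeal R).subtype)) this

/-- If the trace ideal of `m` is all of `R`, then `R` is a DVR. -/
lemma dvr_of_traceIdeal_eq_top (R : Type*) [CommRing R] [IsNoetherianRing R] [IsLocalRing R]
    (htop : traceIdeal R (maximalIdeal R) = ⊤) :
    ∃ _h : IsDomain R, IsDiscreteValuationRing R := by
  classical
  -- Extract a surjective linear map `f : m →ₗ[R] R`.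
  have h1 : (1 : R) ∈ traceIdeal R (maximalIdeal R) := htop ▸ Submodule.mem_top
  rw [traceIdeal, Submodule.mem_iSup_iff_exists_finsupp] at h1
  obtain ⟨F, hF, hFsum⟩ := h1
  -- one of the terms must be a unit
  have hexists : ∃ f : maximalIdeal R →ₗ[R] R, IsUnit (F f) := by
    by_contra hc
    push_neg at hc
    have : (1 : R) ∈ maximalIdeal R := by
      rw [← hFsum]
      exact Ideal.sum_mem _ fun f _ => (mem_maximalIdeal _).2 (hc f)
    exact (maximalIdeal R).ne_top_iff_one.1 (Ideal.IsMaximal.ne_top inferInstance) this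
  obtain ⟨f, x0, hfx0⟩ : ∃ (f : maximalIdeal R →ₗ[R] R) (x0 : maximalIdeal R), f x0 = 1 := by
    obtain ⟨f, hu⟩ := hexists
    obtain ⟨x, hx⟩ := hF f
    obtain ⟨u, hu'⟩ := hu
    exact ⟨f, ((u⁻¹ : Rˣ) : R) • x,
      by rw [map_smul, hx, ← hu', smul_eq_mul, Units.inv_mul]⟩
  clear hexists hFsum hF F
  -- key: kernel of f is trivial
  have hker : ∀ z : maximalIdeal R, f z = 0 → z = 0 := by
    intro z hz
    have hcomm : (z : R) • x0 = (x0 : R) • z := by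
      ext
      simp [mul_comm]
    have := congrArg f hcomm
    rw [map_smul, map_smul, hfx0, smul_eq_mul, mul_one, hz, smul_eq_mul, mul_zero] at this
    ext
    simpa using this
  -- every element of m is a multiple of x0
  have hmul : ∀ z : maximalIdeal R, (z : R) = f z * (x0 : R) := by
    intro z
    have h0 : f (z - f z • x0) = 0 := by
      rw [map_sub, map_smul, hfx0, smul_eq_mul, mul_one, sub_self]
    have := hker _ h0
    have : z = f z • x0 := by rwa [sub_eq_zero] at this
    calc (z : R) = ((f z • x0 : maximalIdeal R) : R) := by rw [← this]
    _ = f z * (x0 : R) := by simp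
  have hnontriv : Nontrivial R := inferInstance
  -- x0 is nonzero
  have hx0ne : (x0 : R) ≠ 0 := by
    intro h
    have : x0 = 0 := by ext; simpa using h
    rw [this, map_zero] at hfx0
    exact one_ne_zero hfx0.symm
  -- x0 is a nonzerodivisor
  have hnzd : ∀ a : R, a * (x0 : R) = 0 → a = 0 := by
    intro a ha
    have h1 : (a • x0 : maximalIdeal R) = 0 := by
      ext; simpa using ha
    have := congrArg f h1
    rw [map_smul, hfx0, smul_eq_mul, mul_one, map_zero] at this
    exact this
  have hx0pow : ∀ n : ℕ, (x0 : R) ^ n ≠ 0 := by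
    intro n
    induction n with
    | zero => simpa using one_ne_zero
    | succ k ih =>
      intro h
      rw [pow_succ] at h
      exact ih (hnzd _ h)
  -- m = span {x0}
  have hspan : maximalIdeal R = Ideal.span {(x0 : R)} := by
    apply le_antisymm
    · intro y hy
      rw [Ideal.mem_span_singleton]
      exact ⟨f ⟨y, hy⟩, by rw [mul_comm]; exact hmul ⟨y, hy⟩⟩
    · rw [Ideal.span_le, Set.singleton_subset_iff]
      exact x0.2
  obtain ⟨t, htdef⟩ : ∃ t : R, (x0 : R) = t := ⟨_, rfl⟩
  rw [htdef] at hspan hx0pow hnzd hx0ne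
  -- Krull intersection
  have hKrull : (⨅ n : ℕ, maximalIdeal R ^ n) = ⊥ :=
    Ideal.iInf_pow_eq_bot_of_isLocalRing _ (Ideal.IsMaximal.ne_top inferInstance)
  -- every nonzero element is a unit times a power of x0
  have hrep : ∀ a : R, a ≠ 0 → ∃ (n : ℕ) (c : R), IsUnit c ∧ a = t ^ n * c := by
    intro a ha
    have hNex : ∃ N : ℕ, a ∉ maximalIdeal R ^ N := by
      by_contra hc
      push_neg at hc
      have : a ∈ (⨅ n : ℕ, maximalIdeal R ^ n) := Submodule.mem_iInf _ |>.mpr hc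
      rw [hKrull] at this
      exact ha (by simpa using this)
    set N := Nat.find hNex with hNdef
    have hNpos : N ≠ 0 := by
      intro h
      have := Nat.find_spec hNex
      rw [← hNdef, h] at this
      simp at this
    obtain ⟨k, hk⟩ := Nat.exists_eq_succ_of_ne_zero hNpos
    have hak : a ∈ maximalIdeal R ^ k := by
      by_contra hc
      have hle := Nat.find_min' hNex hc
      omega
    have hak1 : a ∉ maximalIdeal R ^ (k + 1) := by
      have := Nat.find_spec hNex
      rwa [← hNdef, hk] at this
    rw [hspan, Ideal.span_singleton_pow, Ideal.mem_span_singleton] at hak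
    obtain ⟨c, hc⟩ := hak
    refine ⟨k, c, ?_, hc⟩
    by_contra hcu
    apply hak1
    have hcm : c ∈ maximalIdeal R := (mem_maximalIdeal _).2 hcu
    rw [hc, pow_succ]
    exact Ideal.mul_mem_mul (by rw [hspan, Ideal.span_singleton_pow,
      Ideal.mem_span_singleton]) hcm
  -- R is a domain
  haveI hnzd' : NoZeroDivisors R := by
    constructor
    intro a b hab
    by_contra hc
    push_neg at hc
    obtain ⟨ha, hb⟩ := hc
    obtain ⟨n, c, hcu, rfl⟩ := hrep a ha
    obtain ⟨m, d, hdu, rfl⟩ := hrep b hb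
    have h0 : t ^ (n + m) * (c * d) = 0 := by
      rw [← hab]; ring
    rw [(hcu.mul hdu).mul_left_eq_zero] at h0
    exact hx0pow _ h0
  haveI hdom : IsDomain R := NoZeroDivisors.to_isDomain R
  -- R is not a field
  have hnf : ¬IsField R := by
    rw [isField_iff_maximalIdeal_eq]
    intro h
    have htm : t ∈ maximalIdeal R := htdef ▸ x0.2
    rw [h] at htm
    exact hx0ne (by simpa using htm)
  refine ⟨hdom, ?_⟩
  have hp : (maximalIdeal R).IsPrincipal := ⟨⟨t, hspan⟩⟩
  have hiff := (IsDiscreteValuationRing.TFAE R hnf).out 0 4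
  exact hiff.mpr hp

/-- Conversely, if `R` is a DVR then the trace ideal of `m` is all of `R`. -/
lemma traceIdeal_eq_top_of_dvr (R : Type*) [CommRing R] [IsLocalRing R]
    (h : ∃ _h : IsDomain R, IsDiscreteValuationRing R) :
    traceIdeal R (maximalIdeal R) = ⊤ := by
  obtain ⟨hdom, hdvr⟩ := h
  obtain ⟨π, hπ⟩ := (IsPrincipalIdealRing.principal (maximalIdeal R)).principal
  have hπ0 : π ≠ 0 := by
    intro h0
    apply hdvr.not_a_field'
    rw [hπ, h0]
    simp
  -- `toSpanSingleton R R π : R →ₗ[R] R` is injective with range `span {π}`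
  have hinj : Function.Injective (LinearMap.toSpanSingleton R R π) := by
    intro a b hab
    simp only [LinearMap.toSpanSingleton_apply, smul_eq_mul] at hab
    exact mul_right_cancel₀ hπ0 hab
  set e := LinearEquiv.ofInjective (LinearMap.toSpanSingleton R R π) hinj with hedef
  have hrange : maximalIdeal R = LinearMap.range (LinearMap.toSpanSingleton R R π) := by
    rw [hπ]
    exact LinearMap.span_singleton_eq_range R R π
  set f : maximalIdeal R →ₗ[R] R :=
    e.symm.toLinearMap ∘ₗ (LinearEquiv.ofEq _ _ hrange).toLinearMap with hfdef
  have hπm : π ∈ maximalIdeal R := by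
    rw [hπ]
    exact Submodule.mem_span_singleton_self π
  have hf1 : f ⟨π, hπm⟩ = 1 := by
    rw [hfdef]
    simp only [LinearMap.coe_comp, Function.comp_apply, LinearEquiv.coe_coe]
    rw [LinearEquiv.symm_apply_eq]
    ext
    rw [hedef, LinearEquiv.ofInjective_apply]
    simp [LinearEquiv.coe_ofEq_apply]
  rw [Ideal.eq_top_iff_one]
  exact (le_iSup (fun g : maximalIdeal R →ₗ[R] R => LinearMap.range g) f)
    ⟨⟨π, hπm⟩, hf1⟩

theorem maximalIdeal_not_traceIdeal_iff_dvr (R : Type*) [CommRing R] [IsNoetherianRing R]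
    [IsLocalRing R] :
    (traceIdeal R (IsLocalRing.maximalIdeal R) ≠ IsLocalRing.maximalIdeal R ↔
      traceIdeal R (IsLocalRing.maximalIdeal R) = ⊤) ∧
    (traceIdeal R (IsLocalRing.maximalIdeal R) ≠ IsLocalRing.maximalIdeal R ↔
      ∃ _h : IsDomain R, IsDiscreteValuationRing R) := by
  have hiff : traceIdeal R (maximalIdeal R) ≠ maximalIdeal R ↔
      traceIdeal R (maximalIdeal R) = ⊤ := by
    constructor
    · intro hne
      by_contra htop
      exact hne ((Ideal.IsMaximal.eq_of_le inferInstance htop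
        (maximalIdeal_le_traceIdeal R)).symm)
    · intro htop hne
      exact Ideal.IsMaximal.ne_top (inferInstance : (maximalIdeal R).IsMaximal) (hne ▸ htop)
  refine ⟨hiff, hiff.trans ?_⟩
  exact ⟨dvr_of_traceIdeal_eq_top R, traceIdeal_eq_top_of_dvr R⟩
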